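/- For q = 3 and the quartic extension F_{81} of F_3, there exists a generator γ of F_{81} over F_3 such that γ + a is not a generator of the multiplicative group F_{81}* for any a ∈ F_3. -/

import Mathlib

instance : Fact (Nat.Prime 3) := ⟨by norm_num⟩

/-- `q = 3` is not in `T₄`: there exists a generator `γ` of `F₈₁` over `F₃`
such that `γ + a` is not a generator of the multiplicative group `F₈₁ˣ`
(cyclic of order 80) for any `a ∈ F₃`. -/
theorem three_not_in_T4 :
    ∃ γ : GaloisField 3 4,
      Algebra.adjoin (ZMod 3) {γ} = ⊤ ∧
      ∀ a : ZMod 3,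
        orderOf (γ + algebraMap (ZMod 3) (GaloisField 3 4) a) ≠ 80 := by
  have hchar : (3 : GaloisField 3 4) = 0 := by
    exact_mod_cast CharP.cast_eq_zero (GaloisField 3 4) 3
  -- an element z of multiplicative order 16
  obtain ⟨g, hg⟩ := IsCyclic.exists_generator (α := (GaloisField 3 4)ˣ)
  have hcard : Nat.card (GaloisField 3 4)ˣ = 80 := by
    rw [Nat.card_units, GaloisField.card 3 4 (by norm_num)]; norm_num
  have hord : orderOf g = 80 := by
    rw [orderOf_eq_card_of_forall_mem_zpowers hg, hcard]
  have h16 : orderOf (g ^ 5) = 16 := by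
    rw [orderOf_pow, hord]; norm_num
  set z : GaloisField 3 4 := ((g ^ 5 : (GaloisField 3 4)ˣ) : GaloisField 3 4) with hz
  have hz16 : z ^ 16 = 1 := by
    have h : (g ^ 5) ^ 16 = 1 := by rw [← h16]; exact pow_orderOf_eq_one _
    calc z ^ 16 = (((g ^ 5) ^ 16 : (GaloisField 3 4)ˣ) : GaloisField 3 4) := by
          rw [hz]; push_cast; ring
      _ = 1 := by rw [h]; rfl
  have hz8ne : z ^ 8 ≠ 1 := by
    intro h
    have h' : (g ^ 5) ^ 8 = 1 := by
      rw [hz] at h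
      ext
      push_cast at h ⊢
      linear_combination h
    have := orderOf_dvd_of_pow_eq_one h'
    rw [h16] at this; norm_num at this
  have hz8 : z ^ 8 = -1 := by
    have h : (z ^ 8 - 1) * (z ^ 8 + 1) = 0 := by linear_combination hz16
    rcases mul_eq_zero.1 h with h' | h'
    · exact absurd (by linear_combination h') hz8ne
    · linear_combination h'
  have hfac : (z ^ 4 + z ^ 2 + 2) * (z ^ 4 + 2 * z ^ 2 + 2) = 0 := by
    linear_combination hz8 + (z ^ 6 + 2 * z ^ 4 + 2 * z ^ 2 + 1) * hchar
  obtain ⟨γ, hγ, hγ8⟩ :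
      ∃ γ : GaloisField 3 4, γ ^ 4 + γ ^ 2 + 2 = 0 ∧ γ ^ 8 = -1 := by
    rcases mul_eq_zero.1 hfac with h | h
    · exact ⟨z, h, hz8⟩
    · refine ⟨z ^ 5, ?_, ?_⟩
      · linear_combination (1 + 2*z^2 + 2*z^4 + 2*z^8 + 2*z^12 + z^14 + z^16) * h + ((-2)*z^2 + (-3)*z^4 + (-2)*z^6 + (-2)*z^8 + (-1)*z^10 + (-2)*z^12 + (-2)*z^14 + (-2)*z^16 + (-1)*z^18) * hchar
      · linear_combination (z ^ 24 + z ^ 8) * hz16 + hz8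
  have hγ16 : γ ^ 16 = 1 := by linear_combination (γ ^ 8 - 1) * hγ8
  have h40_1 : (γ + 1) ^ 40 = 1 := by
    linear_combination (2*γ + γ^3 + 2*γ^4 + 2*γ^6 + γ^7 + γ^8 + 2*γ^10 + γ^11 + 2*γ^12 + γ^14 + γ^15 + γ^17 + γ^18 + 2*γ^19 + γ^20 + 2*γ^22 + 2*γ^23 + 2*γ^25 + 2*γ^26 + γ^28 + 2*γ^29 + 2*γ^30 + γ^31 + 2*γ^34 + γ^35 + γ^36) * hγ + (12*γ + 260*γ^2 + 3292*γ^3 + 30462*γ^4 + 219335*γ^5 + 1279458*γ^6 + 6214519*γ^7 + 25634893*γ^8 + 91146293*γ^9 + 282553507*γ^10 + 770600479*γ^11 + 1862284491*γ^12 + 4011074293*γ^13 + 7735643278*γ^14 + 13408448351*γ^15 + 20950700549*γ^16 + 29577459599*γ^17 + 37793420599*γ^18 + 43760802798*γ^19 + 45948842939*γ^20 + 43760802799*γ^21 + 37793420598*γ^22 + 29577459598*γ^23 + 20950700549*γ^24 + 13408448350*γ^25 + 7735643278*γ^26 + 4011074292*γ^27 + 1862284492*γ^28 + 770600478*γ^29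 + 282553507*γ^30 + 91146292*γ^31 + 25634894*γ^32 + 6214519*γ^33 + 1279458*γ^34 + 219335*γ^35 + 30462*γ^36 + 3293*γ^37 + 259*γ^38 + 13*γ^39) * hchar
  have h40_2 : (γ + 2) ^ 40 = 1 := by
    linear_combination (γ + 2*γ^3 + 2*γ^4 + 2*γ^6 + 2*γ^7 + γ^8 + 2*γ^10 + 2*γ^11 + 2*γ^12 + γ^14 + 2*γ^15 + 2*γ^17 + γ^18 + γ^19 + γ^20 + 2*γ^22 + γ^23 + γ^25 + 2*γ^26 + γ^28 + γ^29 + 2*γ^30 + 2*γ^31 + 2*γ^34 + 2*γ^35 + γ^36) * hγ + (366503875925 + 7330077518506*γ + 71468255805440*γ^2 + 452632286767785*γ^3 + 2093424326301012*γ^4 + 7536327574683647*γ^5 + 21980955426160638*γ^6 + 53382320320675838*γ^7 + 110101035661393918*γ^8 + 195735174509144746*γ^9 + 303389520489174355*γ^10 + 413712982485237758*γ^11 + 499903187169662291*γ^12 + 538357278490405546*γ^13 + 519130232830033918*γ^14 + 449912868452696062*γ^15 + 351494428478668799*γ^16 + 248113714220236798*γ^17 + 158517095196262399*γ^18 + 91773055113625598*γ^19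 + 48180853934653439*γ^20 + 22943263778406399*γ^21 + 9907318449766398*γ^22 + 3876776784691199*γ^23 + 1373025111244799*γ^24 + 439368035598335*γ^25 + 126740779499518*γ^26 + 32858720610986*γ^27 + 7627917284692*γ^28 + 1578189783039*γ^29 + 289334793555*γ^30 + 46666902185*γ^31 + 6562533119*γ^32 + 795458559*γ^33 + 81885438*γ^34 + 7018750*γ^35 + 487412*γ^36 + 26346*γ^37 + 1039*γ^38 + 26*γ^39) * hchar
  refine ⟨γ, ?_, ?_⟩
  · -- `γ` generates `F₈₁` over `F₃`, via a counting argument: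
    -- the subalgebra it generates is a finite field of order `3 ^ k`, `k ≤ 4`,
    -- whose unit group contains an element of order 16, so `16 ∣ 3 ^ k - 1`
    -- and hence `k = 4`.
    set A := Algebra.adjoin (ZMod 3) {γ} with hA
    have hγA : γ ∈ A := Algebra.subset_adjoin rfl
    haveI : Fintype (GaloisField 3 4) := Fintype.ofFinite _
    haveI : Fintype A := Fintype.ofFinite _
    letI : Field ↥A := (Finite.isField_of_domain ↥A).toField
    set x : ↥A := ⟨γ, hγA⟩ with hx
    have hx16 : x ^ 16 = 1 := by
      ext; push_cast; exact hγ16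
    have hx8 : x ^ 8 ≠ 1 := by
      intro hcon
      have hcon' : γ ^ 8 = 1 := by
        have := congrArg Subtype.val hcon
        push_cast at this
        exact this
      rw [hγ8] at hcon'
      have h2 : (2 : GaloisField 3 4) = 0 := by linear_combination -hcon'
      have h1 : (1 : GaloisField 3 4) = 0 := by linear_combination hchar - h2
      exact one_ne_zero h1
    have hxord : orderOf x = 16 := by
      have h := orderOf_eq_prime_pow (x := x) (p := 2) (n := 3)
        (by simpa using hx8) (by simpa using hx16)
      simpa using h
    have hx0 : x ≠ 0 := by
      intro h0
      rw [h0, zero_pow (by norm_num : (16:ℕ) ≠ 0)] at hx16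
      exact zero_ne_one hx16
    have hfl : x ^ (Fintype.card ↥A - 1) = 1 :=
      FiniteField.pow_card_sub_one_eq_one x hx0
    have hdvd : (16 : ℕ) ∣ Fintype.card ↥A - 1 := by
      rw [← hxord]
      exact orderOf_dvd_of_pow_eq_one hfl
    have hcardA : Fintype.card ↥A = 3 ^ Module.finrank (ZMod 3) ↥A := by
      rw [Module.card_eq_pow_finrank (K := ZMod 3) (V := ↥A), ZMod.card]
    have hfin4 : Module.finrank (ZMod 3) (GaloisField 3 4) = 4 :=
      GaloisField.finrank 3 (by norm_num)
    have hle : Module.finrank (ZMod 3) ↥A ≤ 4 := by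
      calc Module.finrank (ZMod 3) ↥A
          = Module.finrank (ZMod 3) (Subalgebra.toSubmodule A) :=
            (Subalgebra.finrank_toSubmodule A).symm
        _ ≤ Module.finrank (ZMod 3) (GaloisField 3 4) :=
            Submodule.finrank_le _
        _ = 4 := hfin4
    have hpos : 0 < Module.finrank (ZMod 3) ↥A := Module.finrank_pos
    have hk : Module.finrank (ZMod 3) ↥A = 4 := by
      rw [hcardA] at hdvd
      set k := Module.finrank (ZMod 3) ↥A with hkdef
      interval_cases k <;> revert hdvd <;> norm_num
    have htop : Subalgebra.toSubmodule A = ⊤ := by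
      apply Submodule.eq_top_of_finrank_eq
      rw [Subalgebra.finrank_toSubmodule, hk, hfin4]
    exact Algebra.toSubmodule_eq_top.1 htop
  · intro a
    have ha : ∀ b : ZMod 3, b = 0 ∨ b = 1 ∨ b = 2 := by decide
    have h2map : algebraMap (ZMod 3) (GaloisField 3 4) 2 = 2 := by
      rw [show (2 : ZMod 3) = 1 + 1 from rfl, map_add, map_one]; norm_num
    rcases ha a with rfl | rfl | rfl
    · rw [map_zero, add_zero]
      intro h
      have := orderOf_dvd_of_pow_eq_one hγ16
      rw [h] at this; norm_num at this
    · rw [map_one]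
      intro h
      have := orderOf_dvd_of_pow_eq_one h40_1
      rw [h] at this; norm_num at this
    · rw [h2map]
      intro h
      have := orderOf_dvd_of_pow_eq_one h40_2
      rw [h] at this; norm_num at this
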